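/- arXiv:2306.16151 — 2 statements merged into one kernel-verified Lean document; each statement's English description precedes it below -/
import Mathlib

section
/- Let A be an (N+1)×(N+1) complex Hermitian matrix, let μ be the largest eigenvalue of A, and let E ⊆ ℂ^{N+1} be the eigenspace of A for μ. For w ∈ ℂ^{N+1}, let w_1 denote the orthogonal projection of w onto E. Then e^{−μt}·exp(tA)·w converges to w_1 as the real parameter t → +∞, where exp(tA) is the matrix exponential. -/
open Filter
open scoped Matrix

open NormedSpace in
lemma exp_mulVec_eigen {n : Type*} [Fintype n] [DecidableEq n]
    (M : Matrix n n ℂ) (v : n → ℂ) (c : ℂ) (hv : M *ᵥ v = c • v) :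
    NormedSpace.exp M *ᵥ v = Complex.exp c • v := by
  letI : SeminormedRing (Matrix n n ℂ) := Matrix.linftyOpSemiNormedRing
  letI : NormedRing (Matrix n n ℂ) := Matrix.linftyOpNormedRing
  letI : NormedAlgebra ℂ (Matrix n n ℂ) := Matrix.linftyOpNormedAlgebra
  have hL : IsLinearMap ℂ (fun B : Matrix n n ℂ => B *ᵥ v) :=
    ⟨fun a b => Matrix.add_mulVec a b v, fun a b => Matrix.smul_mulVec a b v⟩
  let L : Matrix n n ℂ →L[ℂ] (n → ℂ) :=
    LinearMap.toContinuousLinearMap (IsLinearMap.mk' _ hL)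
  have hpow : ∀ k : ℕ, M ^ k *ᵥ v = c ^ k • v := by
    intro k; induction k with
    | zero => simp
    | succ k ih =>
      rw [pow_succ', ← Matrix.mulVec_mulVec, ih, Matrix.mulVec_smul, hv, smul_smul, ← pow_succ]
  have h1 : NormedSpace.exp M *ᵥ v = L (NormedSpace.exp M) := rfl
  rw [h1, NormedSpace.exp_eq_tsum (𝕂 := ℂ), L.map_tsum (NormedSpace.expSeries_summable' M)]
  have h2 : ∀ k : ℕ, L (((k.factorial : ℂ))⁻¹ • M ^ k) = (((k.factorial : ℂ))⁻¹ * c ^ k) • v := by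
    intro k
    show ((((k.factorial : ℂ))⁻¹ • M ^ k) *ᵥ v) = _
    rw [Matrix.smul_mulVec, hpow k, smul_smul]
  simp_rw [h2]
  have hs : Summable fun k : ℕ => ((k.factorial : ℂ))⁻¹ * c ^ k := by
    simpa [smul_eq_mul] using NormedSpace.expSeries_summable' (𝕂 := ℂ) c
  rw [hs.tsum_smul_const]
  congr 1
  rw [Complex.exp_eq_exp_ℂ, NormedSpace.exp_eq_tsum (𝕂 := ℂ)]
  simp [smul_eq_mul]

lemma real_smul_complex {E : Type*} [AddCommGroup E] [Module ℂ E] [Module ℝ E]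
    [IsScalarTower ℝ ℂ E] (r : ℝ) (x : E) : r • x = (r : ℂ) • x := by
  rw [← smul_one_smul ℂ r x, Complex.real_smul, mul_one]

/-- Let `A` be an `(N+1) × (N+1)` Hermitian matrix, `μ` its largest
eigenvalue and `E` the eigenspace of `A` for `μ`. For `w ∈ ℂ^{N+1}`, let `w_1` be the
orthogonal projection of `w` onto `E`. Then `e^{−μt}·exp(tA)·w → w_1` as `t → +∞`. -/
theorem statement10 {N : ℕ} (A : Matrix (Fin (N + 1)) (Fin (N + 1)) ℂ)
    (hA : A.IsHermitian) (μ : ℝ) (hμ : IsGreatest (Set.range hA.eigenvalues) μ)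
    (w : EuclideanSpace ℂ (Fin (N + 1))) :
    Tendsto
      (fun t : ℝ =>
        Real.exp (-μ * t) • Matrix.toEuclideanLin (NormedSpace.exp (t • A)) w)
      atTop
      (nhds ((Submodule.orthogonalProjectionOnto
        (Module.End.eigenspace (Matrix.toEuclideanLin A) (μ : ℂ)) w :
          EuclideanSpace ℂ (Fin (N + 1))))) := by
  classical
  set b := hA.eigenvectorBasis with hb
  set lam := hA.eigenvalues with hlam
  have hμ2 : ∀ i, lam i ≤ μ := fun i => hμ.2 ⟨i, rfl⟩
  have heig : ∀ (t : ℝ) (i : Fin (N + 1)),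
      Matrix.toEuclideanLin (NormedSpace.exp (t • A)) (b i)
        = ((Real.exp (t * lam i) : ℝ) : ℂ) • b i := by
    intro t i
    have h1 : (t • A) *ᵥ (b i).ofLp = (((t * lam i : ℝ)) : ℂ) • (b i).ofLp := by
      rw [Matrix.smul_mulVec, hA.mulVec_eigenvectorBasis, smul_smul,
        real_smul_complex]
    have h2 := exp_mulVec_eigen (t • A) (b i).ofLp _ h1
    rw [Complex.ofReal_exp]
    exact congrArg (WithLp.toLp 2) h2
  have key : ∀ t : ℝ, Real.exp (-μ * t) • Matrix.toEuclideanLin (NormedSpace.exp (t • A)) w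
      = ∑ i, ((Real.exp ((lam i - μ) * t) : ℝ) : ℂ) • (inner ℂ (b i) w : ℂ) • b i := by
    intro t
    conv_lhs => rw [← b.sum_repr' w]
    rw [map_sum, Finset.smul_sum]
    refine Finset.sum_congr rfl fun i _ => ?_
    rw [LinearMap.map_smul, heig t i]
    rw [real_smul_complex (Real.exp (-μ * t))]
    rw [smul_comm ((inner ℂ (b i) w : ℂ)), smul_smul, smul_smul, ← smul_smul]
    congr 2
    rw [← Complex.ofReal_mul, ← Real.exp_add]
    ring_nf
  have hlim : Tendsto (fun t : ℝ => ∑ i, ((Real.exp ((lam i - μ) * t) : ℝ) : ℂ) •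
        (inner ℂ (b i) w : ℂ) • b i) atTop
      (nhds (∑ i, if lam i = μ then (inner ℂ (b i) w : ℂ) • b i else 0)) := by
    refine tendsto_finset_sum _ fun i _ => ?_
    by_cases h : lam i = μ
    · simp only [h, sub_self, zero_mul, Real.exp_zero, Complex.ofReal_one, one_smul, if_pos]
      exact tendsto_const_nhds
    · have hlt : lam i - μ < 0 := sub_neg.2 (lt_of_le_of_ne (hμ2 i) h)
      simp only [if_neg h]
      have h0 : Tendsto (fun t : ℝ => Real.exp ((lam i - μ) * t)) atTop (nhds 0) := by
        refine Real.tendsto_exp_atBot.comp ?_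
        exact Tendsto.const_mul_atTop_of_neg hlt tendsto_id
      have h1 : Tendsto (fun t : ℝ => ((Real.exp ((lam i - μ) * t) : ℝ) : ℂ)) atTop (nhds 0) := by
        exact_mod_cast (Complex.continuous_ofReal.tendsto 0).comp h0
      simpa using h1.smul_const ((inner ℂ (b i) w : ℂ) • b i)
  have hproj : (Submodule.orthogonalProjectionOnto
        (Module.End.eigenspace (Matrix.toEuclideanLin A) (μ : ℂ)) w :
          EuclideanSpace ℂ (Fin (N + 1)))
      = ∑ i, if lam i = μ then (inner ℂ (b i) w : ℂ) • b i else 0 := by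
    have hbe : ∀ i, Matrix.toEuclideanLin A (b i) = ((lam i : ℝ) : ℂ) • b i := by
      intro i
      have h0 : Matrix.toEuclideanLin A (b i) = (lam i : ℝ) • b i :=
        congrArg (WithLp.toLp 2) (hA.mulVec_eigenvectorBasis i)
      rw [h0, real_smul_complex]
    refine Submodule.eq_starProjection_of_mem_of_inner_eq_zero ?_ ?_
    · refine Submodule.sum_mem _ fun i _ => ?_
      split_ifs with h
      · refine Submodule.smul_mem _ _ ?_
        rw [Module.End.mem_eigenspace_iff, hbe i, h]
      · exact Submodule.zero_mem _
    · intro e he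
      rw [Module.End.mem_eigenspace_iff] at he
      have hsymm := (Matrix.isHermitian_iff_isSymmetric.1 hA)
      have hzero : ∀ i, lam i ≠ μ → (inner ℂ (b i) e : ℂ) = 0 := by
        intro i h
        have h1 : ((lam i : ℝ) : ℂ) * inner ℂ (b i) e = ((μ : ℝ) : ℂ) * inner ℂ (b i) e := by
          have h2 := hsymm (b i) e
          rw [hbe i, he, inner_smul_left, inner_smul_right, Complex.conj_ofReal] at h2
          exact h2
        have h3 : (((lam i : ℝ) : ℂ) - ((μ : ℝ) : ℂ)) * inner ℂ (b i) e = 0 := by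
          rw [sub_mul, h1, sub_self]
        rcases mul_eq_zero.1 h3 with h4 | h4
        · exact absurd (Complex.ofReal_injective (sub_eq_zero.1 h4)) h
        · exact h4
      rw [← b.sum_inner_mul_inner]
      refine Finset.sum_eq_zero fun i _ => ?_
      by_cases h : lam i = μ
      · have hP : (inner ℂ (∑ j, if lam j = μ then (inner ℂ (b j) w : ℂ) • b j else 0) (b i) : ℂ)
            = inner ℂ w (b i) := by
          rw [sum_inner]
          rw [Finset.sum_eq_single i]
          · rw [if_pos h, inner_smul_left, inner_self_eq_norm_sq_to_K]
            rw [inner_conj_symm]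
            simp [b.orthonormal.1 i]
          · intro j _ hji
            split_ifs with hj
            · rw [inner_smul_left, b.orthonormal.2 hji, mul_zero]
            · exact inner_zero_left _
          · intro hi; exact absurd (Finset.mem_univ i) hi
        rw [inner_sub_left, hP, sub_self, zero_mul]
      · rw [hzero i h, mul_zero]
  rw [hproj]
  exact hlim.congr fun t => (key t).symm
end

section
/- Let M be a connected, Hausdorff topological space that is locally Euclidean (every point has an open neighborhood homeomorphic to an open subset of some ℝⁿ) and metrizable. Then M is second countable (its topology has a countable basis). -/
open Metric Set

/-- A connected, Hausdorff, locally Euclidean, metrizable topological space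
is second countable. -/
theorem statement11 {M : Type*} [TopologicalSpace M] [ConnectedSpace M] [T2Space M]
    [TopologicalSpace.MetrizableSpace M]
    (hloc : ∀ x : M, ∃ (n : ℕ) (U : Set M) (V : Set (EuclideanSpace ℝ (Fin n))),
      x ∈ U ∧ IsOpen U ∧ IsOpen V ∧ Nonempty (U ≃ₜ V)) :
    SecondCountableTopology M := by
  letI : MetricSpace M := TopologicalSpace.metrizableSpaceMetric M
  -- Step 1: every point has a compact neighborhood, hence a small compact closed ball.
  have hwlc : ∀ x : M, ∃ K : Set M, IsCompact K ∧ K ∈ nhds x := by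
    intro x
    obtain ⟨n, U, V, hxU, hU, hV, ⟨e⟩⟩ := hloc x
    haveI : LocallyCompactSpace V := hV.locallyCompactSpace
    haveI : LocallyCompactSpace U := e.locallyCompactSpace_iff.2 inferInstance
    obtain ⟨K, hKc, hKn⟩ := exists_compact_mem_nhds (⟨x, hxU⟩ : U)
    refine ⟨Subtype.val '' K, hKc.image continuous_subtype_val, ?_⟩
    rw [← hU.isOpenEmbedding_subtypeVal.map_nhds_eq ⟨x, hxU⟩]
    exact Filter.image_mem_map hKn
  have hball : ∀ x : M, ∃ r : ℝ, 0 < r ∧ r ≤ 1 ∧ IsCompact (closedBall x r) := by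
    intro x
    obtain ⟨K, hKc, hKn⟩ := hwlc x
    obtain ⟨ε, hε, hεK⟩ := Metric.mem_nhds_iff.1 hKn
    refine ⟨min (ε / 2) 1, by positivity, min_le_right _ _, ?_⟩
    exact hKc.of_isClosed_subset Metric.isClosed_closedBall
      (fun y hy => hεK (lt_of_le_of_lt (mem_closedBall.1 hy)
        (lt_of_le_of_lt (min_le_left _ _) (by linarith))))
  -- the "compactness radius" function
  set S : M → Set ℝ := fun x => {r | 0 < r ∧ r ≤ 1 ∧ IsCompact (closedBall x r)} with hS
  have hSne : ∀ x, (S x).Nonempty := fun x => by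
    obtain ⟨r, h1, h2, h3⟩ := hball x; exact ⟨r, h1, h2, h3⟩
  have hSbdd : ∀ x, BddAbove (S x) := fun x => ⟨1, fun r hr => hr.2.1⟩
  set ρ : M → ℝ := fun x => sSup (S x) with hρ
  have hρpos : ∀ x, 0 < ρ x := fun x => by
    obtain ⟨r, h1, h2, h3⟩ := hball x
    exact lt_of_lt_of_le h1 (le_csSup (hSbdd x) ⟨h1, h2, h3⟩)
  have hρle1 : ∀ x, ρ x ≤ 1 := fun x => csSup_le (hSne x) fun r hr => hr.2.1
  have hcomp : ∀ x r, 0 ≤ r → r < ρ x → IsCompact (closedBall x r) := by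
    intro x r hr0 hr
    obtain ⟨r', hr'S, hrr'⟩ := exists_lt_of_lt_csSup (hSne x) hr
    exact hr'S.2.2.of_isClosed_subset Metric.isClosed_closedBall
      (closedBall_subset_closedBall hrr'.le)
  have hlip : ∀ x y : M, ρ x - dist x y ≤ ρ y := by
    intro x y
    rw [sub_le_iff_le_add]
    refine csSup_le (hSne x) fun r hr => ?_
    rcases le_or_gt r (dist x y) with h | h
    · linarith [(hρpos y).le]
    · calc r = (r - dist x y) + dist x y := by ring
        _ ≤ ρ y + dist x y := by
            refine add_le_add (le_csSup (hSbdd y) ⟨by linarith, ?_, ?_⟩) le_rfl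
            · linarith [hr.2.1, dist_nonneg (x := x) (y := y)]
            · exact hr.2.2.of_isClosed_subset Metric.isClosed_closedBall fun z hz =>
                mem_closedBall.2 (by
                  have := mem_closedBall.1 hz
                  calc dist z x ≤ dist z y + dist y x := dist_triangle _ _ _
                    _ ≤ (r - dist x y) + dist x y := by
                        rw [dist_comm y x]; linarith
                    _ = r := by ring)
  -- Step 2: every compact set is contained in a compact set containing the half-radius
  -- closed balls of all its points.
  have hgrow : ∀ K : Set M, IsCompact K → ∃ K' : Set M, IsCompact K' ∧
      ∀ x ∈ K, closedBall x (ρ x / 2) ⊆ K' := by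
    intro K hK
    obtain ⟨t, htK, hcov⟩ := hK.elim_nhds_subcover (fun i => ball i (ρ i / 8))
      (fun i _ => ball_mem_nhds i (by linarith [hρpos i]))
    refine ⟨⋃ i ∈ t, closedBall i (11 * ρ i / 16),
      t.isCompact_biUnion fun i _ => hcomp i _ (by linarith [hρpos i]) (by linarith [hρpos i]),
      fun x hx y hy => ?_⟩
    obtain ⟨i, hit, hxi⟩ := Set.mem_iUnion₂.1 (hcov hx)
    have hxi' : dist x i < ρ i / 8 := mem_ball.1 hxi
    have h1 : ρ x ≤ ρ i + dist x i := by linarith [hlip x i]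
    have h2 : dist y x ≤ ρ x / 2 := mem_closedBall.1 hy
    refine Set.mem_iUnion₂.2 ⟨i, hit, mem_closedBall.2 ?_⟩
    calc dist y i ≤ dist y x + dist x i := dist_triangle _ _ _
      _ ≤ 11 * ρ i / 16 := by linarith
  -- Step 3: iterate to produce a σ-compact clopen set; by connectedness it is everything.
  obtain ⟨x₀⟩ : Nonempty M := inferInstance
  choose F hFc hFs using hgrow
  let seq : ℕ → {K : Set M // IsCompact K} := fun n =>
    Nat.rec ⟨{x₀}, isCompact_singleton⟩ (fun _ K => ⟨F K.1 K.2, hFc K.1 K.2⟩) n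
  have hseq : ∀ n, ∀ x ∈ (seq n).1, closedBall x (ρ x / 2) ⊆ (seq (n + 1)).1 :=
    fun n => hFs (seq n).1 (seq n).2
  set T : Set M := ⋃ n, (seq n).1 with hT
  have hTopen : IsOpen T := by
    rw [Metric.isOpen_iff]
    intro x hx
    obtain ⟨n, hn⟩ := Set.mem_iUnion.1 hx
    exact ⟨ρ x / 2, by linarith [hρpos x],
      fun y hy => Set.mem_iUnion.2 ⟨n + 1, hseq n x hn (ball_subset_closedBall hy)⟩⟩
  have hTclosed : IsClosed T := by
    rw [← closure_eq_iff_isClosed]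
    refine Set.Subset.antisymm (fun x hx => ?_) subset_closure
    obtain ⟨y, hyT, hxy⟩ := Metric.mem_closure_iff.1 hx (ρ x / 3) (by linarith [hρpos x])
    obtain ⟨n, hn⟩ := Set.mem_iUnion.1 hyT
    have h1 : ρ x - dist x y ≤ ρ y := hlip x y
    refine Set.mem_iUnion.2 ⟨n + 1, hseq n y hn (mem_closedBall.2 ?_)⟩
    have h2 : dist x y = dist y x := dist_comm x y
    linarith
  have hTuniv : T = Set.univ :=
    IsClopen.eq_univ ⟨hTclosed, hTopen⟩ ⟨x₀, Set.mem_iUnion.2 ⟨0, rfl⟩⟩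
  haveI : SigmaCompactSpace M :=
    SigmaCompactSpace_iff_exists_compact_covering.2 ⟨fun n => (seq n).1,
      fun n => (seq n).2, hTuniv⟩
  infer_instance
end
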